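/- arXiv:2406.19511 — 2 statements merged into one kernel-verified Lean document; each statement's English description precedes it below -/
import Mathlib

section
/- Let W be the irreducible lowest weight (g,K)-module of lowest weight ζ and let W^{cl} be the irreducible highest weight module of highest weight ζ-2. Then there exists a non-split extension of (g,K)-modules 0 → W^{cl} → E → W → 0; moreover Ext¹_{(g,K)}(W, W^{cl}) is one-dimensional. -/
section eig
variable {V : Type*} [AddCommGroup V] [Module ℂ V]

/-- An eigenvector whose eigenvalue differs from the eigenvalues of a spanning family of
eigenvectors must vanish. -/
lemma eig_zero (T : Module.End ℂ V) (u : ℕ → V) (μ : ℕ → ℂ)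
    (hu : ∀ k, T (u k) = μ k • u k) (ν : ℂ) (hν : ∀ k, μ k ≠ ν)
    (x : V) (hx : x ∈ Submodule.span ℂ (Set.range u)) (hTx : T x = ν • x) : x = 0 := by
  have hsub : Submodule.span ℂ (Set.range u) ≤ ⨆ c : {c : ℂ // c ≠ ν}, T.eigenspace c := by
    rw [Submodule.span_le]
    rintro _ ⟨k, rfl⟩
    exact Submodule.mem_iSup_of_mem ⟨μ k, hν k⟩ (Module.End.mem_eigenspace_iff.2 (hu k))
  have hdisj := T.eigenspaces_iSupIndep ν
  have hx2 : x ∈ ⨆ c, ⨆ (_ : c ≠ ν), T.eigenspace c := by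
    have := hsub hx
    rwa [iSup_subtype'] 
  have := hdisj.le_bot (Submodule.mem_inf.2 ⟨Module.End.mem_eigenspace_iff.2 hTx, hx2⟩)
  simpa using this

lemma eig_mem_span_singleton (T : Module.End ℂ V) (u : ℕ → V) (μ : ℕ → ℂ)
    (hu : ∀ k, T (u k) = μ k • u k) (hμ : ∀ k, μ (k + 1) ≠ μ 0)
    (x : V) (hx : x ∈ Submodule.span ℂ (Set.range u)) (hTx : T x = μ 0 • x) :
    ∃ a : ℂ, x = a • u 0 := by
  have hle : Submodule.span ℂ (Set.range u) ≤
      Submodule.span ℂ {u 0} ⊔ Submodule.span ℂ (Set.range fun k => u (k + 1)) := by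
    rw [Submodule.span_le]
    rintro _ ⟨k, rfl⟩
    cases k with
    | zero => exact Submodule.mem_sup_left (Submodule.mem_span_singleton_self _)
    | succ m => exact Submodule.mem_sup_right (Submodule.subset_span ⟨m, rfl⟩)
  obtain ⟨y, hy, z, hz, rfl⟩ := Submodule.mem_sup.1 (hle hx)
  obtain ⟨a, rfl⟩ := Submodule.mem_span_singleton.1 hy
  refine ⟨a, ?_⟩
  have hz0 : z = 0 := by
    apply eig_zero T (fun k => u (k + 1)) (fun k => μ (k + 1)) (fun k => hu (k+1)) (μ 0) hμ z hz
    have := hu 0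
    rw [map_add, map_smul, this, smul_add, smul_smul, smul_smul, mul_comm] at hTx
    exact add_left_cancel hTx
  rw [hz0, add_zero]

lemma eig_surj (T : Module.End ℂ V) (u : ℕ → V) (μ : ℕ → ℂ)
    (hu : ∀ k, T (u k) = μ k • u k) (hspan : ∀ x : V, x ∈ Submodule.span ℂ (Set.range u))
    (ν : ℂ) (hν : ∀ k, ν - μ k ≠ 0) (t : V) : ∃ x, ν • x - T x = t := by
  induction hspan t using Submodule.span_induction with
  | mem t ht =>
      obtain ⟨k, rfl⟩ := ht
      refine ⟨(ν - μ k)⁻¹ • u k, ?_⟩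
      rw [map_smul, hu k, smul_smul, smul_smul, ← sub_smul]
      have : ν * (ν - μ k)⁻¹ - (ν - μ k)⁻¹ * μ k = 1 := by
        rw [mul_comm (ν - μ k)⁻¹ (μ k), ← sub_mul, mul_inv_cancel₀ (hν k)]
      rw [this, one_smul]
  | zero => exact ⟨0, by simp⟩
  | add x y hx hy ihx ihy =>
      obtain ⟨x', hx'⟩ := ihx; obtain ⟨y', hy'⟩ := ihy
      exact ⟨x' + y', by rw [smul_add, map_add]; rw [← hx', ← hy']; abel⟩
  | smul a x hx ihx =>
      obtain ⟨x', hx'⟩ := ihx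
      exact ⟨a • x', by rw [map_smul, smul_comm, ← smul_sub, hx']⟩

end eig




/-- Let `W` be the irreducible lowest weight (𝔤,K)-module of lowest
weight `ζ` and `Wcl` the irreducible highest weight module of highest weight
`ζ - 2`.  Then there is a non-split extension `0 → Wcl → E → W → 0` of
(𝔤,K)-modules, and moreover `Ext¹_{(𝔤,K)}(W, Wcl)` is one-dimensional: any two
non-split extensions agree up to an isomorphism of extensions and a nonzero
scalar.

(𝔤,K)-modules are modeled as ℂ-vector spaces with operators `K, P, M`
satisfying `[P,M] = K`, `[K,P] = 2P`, `[K,M] = -2M`.  Since every short exact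
sequence of ℂ-vector spaces splits linearly, extensions of `W` by `Wcl` are
modeled on the carrier `Wcl × W` with `ι = inl` and `π = snd`. -/
theorem exists_nonsplit_extension_and_ext_one_dimensional
    {Wcl W : Type*} [AddCommGroup Wcl] [Module ℂ Wcl] [AddCommGroup W] [Module ℂ W]
    (Kc Pc Mc : Module.End ℂ Wcl) (KW PW MW : Module.End ℂ W)
    (hc1 : Pc * Mc - Mc * Pc = Kc) (hc2 : Kc * Pc - Pc * Kc = (2 : ℂ) • Pc)
    (hc3 : Kc * Mc - Mc * Kc = (-2 : ℂ) • Mc)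
    (hW1 : PW * MW - MW * PW = KW) (hW2 : KW * PW - PW * KW = (2 : ℂ) • PW)
    (hW3 : KW * MW - MW * KW = (-2 : ℂ) • MW)
    -- W is the irreducible lowest weight module of lowest weight ζ:
    (ζ : ℂ) (v : W) (hKv : KW v = ζ • v) (hMv : MW v = 0) (hv : v ≠ 0)
    (hgenW : ∀ w : W, w ∈ Submodule.span ℂ (Set.range fun n : ℕ => (PW ^ n) v))
    (hirrW : ∀ U : Submodule ℂ W, (∀ x ∈ U, KW x ∈ U) → (∀ x ∈ U, PW x ∈ U) →
      (∀ x ∈ U, MW x ∈ U) → U = ⊥ ∨ U = ⊤)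
    -- Wcl is the irreducible highest weight module of highest weight ζ - 2:
    (w : Wcl) (hKw : Kc w = (ζ - 2) • w) (hPw : Pc w = 0) (hw : w ≠ 0)
    (hgenc : ∀ x : Wcl, x ∈ Submodule.span ℂ (Set.range fun n : ℕ => (Mc ^ n) w))
    (hirrc : ∀ U : Submodule ℂ Wcl, (∀ x ∈ U, Kc x ∈ U) → (∀ x ∈ U, Pc x ∈ U) →
      (∀ x ∈ U, Mc x ∈ U) → U = ⊥ ∨ U = ⊤) :
    -- (1) there exists a non-split extension 0 → Wcl → E → W → 0:
    (∃ KE PE ME : Module.End ℂ (Wcl × W),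
      PE * ME - ME * PE = KE ∧ KE * PE - PE * KE = (2 : ℂ) • PE ∧
        KE * ME - ME * KE = (-2 : ℂ) • ME ∧
      (LinearMap.inl ℂ Wcl W) ∘ₗ Kc = KE ∘ₗ (LinearMap.inl ℂ Wcl W) ∧
      (LinearMap.inl ℂ Wcl W) ∘ₗ Pc = PE ∘ₗ (LinearMap.inl ℂ Wcl W) ∧
      (LinearMap.inl ℂ Wcl W) ∘ₗ Mc = ME ∘ₗ (LinearMap.inl ℂ Wcl W) ∧
      (LinearMap.snd ℂ Wcl W) ∘ₗ KE = KW ∘ₗ (LinearMap.snd ℂ Wcl W) ∧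
      (LinearMap.snd ℂ Wcl W) ∘ₗ PE = PW ∘ₗ (LinearMap.snd ℂ Wcl W) ∧
      (LinearMap.snd ℂ Wcl W) ∘ₗ ME = MW ∘ₗ (LinearMap.snd ℂ Wcl W) ∧
      ¬ ∃ s : W →ₗ[ℂ] Wcl × W, (LinearMap.snd ℂ Wcl W) ∘ₗ s = LinearMap.id ∧
          s ∘ₗ KW = KE ∘ₗ s ∧ s ∘ₗ PW = PE ∘ₗ s ∧ s ∘ₗ MW = ME ∘ₗ s) ∧
    -- (2) Ext¹ is one-dimensional: any two non-split extensions are equivalent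
    -- after rescaling the inclusion by a nonzero scalar c:
    (∀ KE₁ PE₁ ME₁ KE₂ PE₂ ME₂ : Module.End ℂ (Wcl × W),
      (PE₁ * ME₁ - ME₁ * PE₁ = KE₁ ∧ KE₁ * PE₁ - PE₁ * KE₁ = (2 : ℂ) • PE₁ ∧
        KE₁ * ME₁ - ME₁ * KE₁ = (-2 : ℂ) • ME₁) →
      (PE₂ * ME₂ - ME₂ * PE₂ = KE₂ ∧ KE₂ * PE₂ - PE₂ * KE₂ = (2 : ℂ) • PE₂ ∧
        KE₂ * ME₂ - ME₂ * KE₂ = (-2 : ℂ) • ME₂) →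
      ((LinearMap.inl ℂ Wcl W) ∘ₗ Kc = KE₁ ∘ₗ (LinearMap.inl ℂ Wcl W) ∧
        (LinearMap.inl ℂ Wcl W) ∘ₗ Pc = PE₁ ∘ₗ (LinearMap.inl ℂ Wcl W) ∧
        (LinearMap.inl ℂ Wcl W) ∘ₗ Mc = ME₁ ∘ₗ (LinearMap.inl ℂ Wcl W) ∧
        (LinearMap.snd ℂ Wcl W) ∘ₗ KE₁ = KW ∘ₗ (LinearMap.snd ℂ Wcl W) ∧
        (LinearMap.snd ℂ Wcl W) ∘ₗ PE₁ = PW ∘ₗ (LinearMap.snd ℂ Wcl W) ∧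
        (LinearMap.snd ℂ Wcl W) ∘ₗ ME₁ = MW ∘ₗ (LinearMap.snd ℂ Wcl W)) →
      ((LinearMap.inl ℂ Wcl W) ∘ₗ Kc = KE₂ ∘ₗ (LinearMap.inl ℂ Wcl W) ∧
        (LinearMap.inl ℂ Wcl W) ∘ₗ Pc = PE₂ ∘ₗ (LinearMap.inl ℂ Wcl W) ∧
        (LinearMap.inl ℂ Wcl W) ∘ₗ Mc = ME₂ ∘ₗ (LinearMap.inl ℂ Wcl W) ∧
        (LinearMap.snd ℂ Wcl W) ∘ₗ KE₂ = KW ∘ₗ (LinearMap.snd ℂ Wcl W) ∧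
        (LinearMap.snd ℂ Wcl W) ∘ₗ PE₂ = PW ∘ₗ (LinearMap.snd ℂ Wcl W) ∧
        (LinearMap.snd ℂ Wcl W) ∘ₗ ME₂ = MW ∘ₗ (LinearMap.snd ℂ Wcl W)) →
      (¬ ∃ s : W →ₗ[ℂ] Wcl × W, (LinearMap.snd ℂ Wcl W) ∘ₗ s = LinearMap.id ∧
          s ∘ₗ KW = KE₁ ∘ₗ s ∧ s ∘ₗ PW = PE₁ ∘ₗ s ∧ s ∘ₗ MW = ME₁ ∘ₗ s) →
      (¬ ∃ s : W →ₗ[ℂ] Wcl × W, (LinearMap.snd ℂ Wcl W) ∘ₗ s = LinearMap.id ∧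
          s ∘ₗ KW = KE₂ ∘ₗ s ∧ s ∘ₗ PW = PE₂ ∘ₗ s ∧ s ∘ₗ MW = ME₂ ∘ₗ s) →
      ∃ (c : ℂ) (φ : (Wcl × W) ≃ₗ[ℂ] (Wcl × W)), c ≠ 0 ∧
        (φ : Wcl × W →ₗ[ℂ] Wcl × W) ∘ₗ KE₁ = KE₂ ∘ₗ (φ : Wcl × W →ₗ[ℂ] Wcl × W) ∧
        (φ : Wcl × W →ₗ[ℂ] Wcl × W) ∘ₗ PE₁ = PE₂ ∘ₗ (φ : Wcl × W →ₗ[ℂ] Wcl × W) ∧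
        (φ : Wcl × W →ₗ[ℂ] Wcl × W) ∘ₗ ME₁ = ME₂ ∘ₗ (φ : Wcl × W →ₗ[ℂ] Wcl × W) ∧
        (LinearMap.snd ℂ Wcl W) ∘ₗ (φ : Wcl × W →ₗ[ℂ] Wcl × W)
          = LinearMap.snd ℂ Wcl W ∧
        (φ : Wcl × W →ₗ[ℂ] Wcl × W) ∘ₗ (LinearMap.inl ℂ Wcl W)
          = c • LinearMap.inl ℂ Wcl W) := by
  classical
  -- pointwise commutator facts
  have hKPc : ∀ x : Wcl, Kc (Pc x) = Pc (Kc x) + (2:ℂ) • Pc x := fun x => by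
    have h := DFunLike.congr_fun hc2 x
    simp only [LinearMap.sub_apply, Module.End.mul_apply, LinearMap.smul_apply] at h
    linear_combination (norm := module) h
  have hKMc : ∀ x : Wcl, Kc (Mc x) = Mc (Kc x) - (2:ℂ) • Mc x := fun x => by
    have h := DFunLike.congr_fun hc3 x
    simp only [LinearMap.sub_apply, Module.End.mul_apply, LinearMap.smul_apply] at h
    linear_combination (norm := module) h
  have hMPc : ∀ x : Wcl, Mc (Pc x) = Pc (Mc x) - Kc x := fun x => by
    have h := DFunLike.congr_fun hc1 x
    simp only [LinearMap.sub_apply, Module.End.mul_apply] at h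
    linear_combination (norm := module) -h
  have hKPW : ∀ x : W, KW (PW x) = PW (KW x) + (2:ℂ) • PW x := fun x => by
    have h := DFunLike.congr_fun hW2 x
    simp only [LinearMap.sub_apply, Module.End.mul_apply, LinearMap.smul_apply] at h
    linear_combination (norm := module) h
  have hMPW : ∀ x : W, MW (PW x) = PW (MW x) - KW x := fun x => by
    have h := DFunLike.congr_fun hW1 x
    simp only [LinearMap.sub_apply, Module.End.mul_apply] at h
    linear_combination (norm := module) -h
  -- the weight vectors of W
  set b : ℕ → W := fun n => (PW ^ n) v with hbdef
  have hb0 : b 0 = v := by simp [hbdef]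
  have hPb : ∀ n, PW (b n) = b (n + 1) := fun n => by
    simp only [hbdef, pow_succ', Module.End.mul_apply]
  have hKb : ∀ n : ℕ, KW (b n) = (ζ + 2 * n) • b n := by
    intro n
    induction n with
    | zero => rw [hb0, hKv]; norm_num
    | succ n ih =>
        rw [← hPb n, hKPW, ih, map_smul, hPb]
        push_cast
        module
  have hMb : ∀ n : ℕ, MW (b (n + 1)) = (-((n:ℂ) + 1) * (ζ + n)) • b n := by
    intro n
    induction n with
    | zero =>
        rw [← hPb 0, hMPW, hb0, hMv, hKv, map_zero]
        push_cast
        module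
    | succ n ih =>
        rw [← hPb (n+1), hMPW, ih, map_smul, hPb, hKb]
        push_cast
        module
  -- the weight vectors of Wcl
  set u : ℕ → Wcl := fun k => (Mc ^ k) w with hudef
  have hu0 : u 0 = w := by simp [hudef]
  have hMu : ∀ k, Mc (u k) = u (k + 1) := fun k => by
    simp only [hudef, pow_succ', Module.End.mul_apply]
  have hKu : ∀ k : ℕ, Kc (u k) = (ζ - 2 - 2 * k) • u k := by
    intro k
    induction k with
    | zero => rw [hu0, hKw]; norm_num
    | succ k ih =>
        rw [← hMu k, hKMc, ih, map_smul, hMu]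
        push_cast
        module
  -- eigenvalue facts in Wcl
  have hker : ∀ (ν : ℂ), (∀ k : ℕ, ζ - 2 - 2 * k ≠ ν) → ∀ x : Wcl, Kc x = ν • x → x = 0 := by
    intro ν hν x hx
    exact eig_zero Kc u (fun k => ζ - 2 - 2 * k) hKu ν hν x (by rw [hudef]; exact hgenc x) hx
  have hker' : ∀ (n : ℕ) (x : Wcl), Kc x = (ζ + 2 * n) • x → x = 0 := by
    intro n x hx
    refine hker (ζ + 2 * n) (fun k h => ?_) x hx
    have : (2 : ℂ) + 2 * k + 2 * n = 0 := by linear_combination -h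
    have h2 : ((2 : ℂ) + 2 * k + 2 * n) ≠ 0 := by
      have hk : (0:ℝ) ≤ (k:ℝ) := k.cast_nonneg
      have hn : (0:ℝ) ≤ (n:ℝ) := n.cast_nonneg
      intro hc
      have := congrArg Complex.re hc
      push_cast at this
      simp at this
      linarith
    exact h2 this
  have hwdim : ∀ x : Wcl, Kc x = (ζ - 2) • x → ∃ a : ℂ, x = a • w := by
    intro x hx
    have := eig_mem_span_singleton Kc u (fun k => ζ - 2 - 2 * k) hKu
      (fun k h => ?_) x (by rw [hudef]; exact hgenc x) (by simpa using hx)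
    · simpa [hu0] using this
    · have : (2:ℂ) * (k+1) = 0 := by push_cast at h ⊢; linear_combination -h
      simp at this
      exact Nat.cast_add_one_ne_zero k this
  have hsurj : ∀ t : Wcl, ∃ x, ζ • x - Kc x = t := by
    intro t
    refine eig_surj Kc u (fun k => ζ - 2 - 2 * k) hKu (fun x => by rw [hudef]; exact hgenc x)
      ζ (fun k => ?_) t
    intro h
    have : (2:ℂ) + 2 * k = 0 := by linear_combination h
    have hk : ((2:ℂ) + 2 * k) ≠ 0 := by
      intro hc
      have := congrArg Complex.re hc
      push_cast at this
      simp at this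
      have hk' : (0:ℝ) ≤ (k:ℝ) := k.cast_nonneg
      linarith
    exact hk this
  -- basis of W given by the nonzero weight vectors
  have hcast2 : ∀ m n : ℕ, (m:ℂ) = n → m = n := fun m n h => Nat.cast_injective h
  have li : LinearIndependent ℂ (fun i : {n : ℕ // b n ≠ 0} => b i) := by
    apply Module.End.eigenvectors_linearIndependent' KW (fun i : {n : ℕ // b n ≠ 0} => ζ + 2 * (i:ℕ))
    · intro i j hij
      simp only at hij
      have : ((i:ℕ):ℂ) = ((j:ℕ):ℂ) := by
        have h2 : (2:ℂ) ≠ 0 := two_ne_zero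
        field_simp at hij
        linear_combination hij / 2
      exact Subtype.ext (hcast2 _ _ this)
    · intro i
      exact ⟨Module.End.mem_eigenspace_iff.2 (hKb i), i.2⟩
  have hsp : ⊤ ≤ Submodule.span ℂ (Set.range (fun i : {n : ℕ // b n ≠ 0} => b i)) := by
    intro x _
    have hx := hgenW x
    have hle : Submodule.span ℂ (Set.range b) ≤
        Submodule.span ℂ (Set.range (fun i : {n : ℕ // b n ≠ 0} => b i)) := by
      rw [Submodule.span_le]
      rintro _ ⟨n, rfl⟩
      by_cases h : b n = 0
      · rw [h]; exact Submodule.zero_mem _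
      · exact Submodule.subset_span ⟨⟨n, h⟩, rfl⟩
    exact hle hx
  set Bw : Module.Basis {n : ℕ // b n ≠ 0} ℂ W := Module.Basis.mk li hsp with hBwdef
  have hBw : ∀ i, Bw i = b i := fun i => by rw [hBwdef, Module.Basis.mk_apply]
  have hb0ne : b 0 ≠ 0 := by rw [hb0]; exact hv
  -- the fundamental cocycle F
  set F : W →ₗ[ℂ] Wcl := Bw.constr ℂ (fun i => if (i:ℕ) = 0 then w else 0) with hFdef
  have hFb : ∀ n (h : b n ≠ 0), F (b n) = if n = 0 then w else 0 := by
    intro n h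
    have : b n = Bw ⟨n, h⟩ := (hBw ⟨n, h⟩).symm
    rw [this, hFdef, Module.Basis.constr_basis]
  have hF0 : F (b 0) = w := by rw [hFb 0 hb0ne]; simp
  have hFs : ∀ n, F (b (n + 1)) = 0 := by
    intro n
    by_cases h : b (n+1) = 0
    · rw [h, map_zero]
    · rw [hFb (n+1) h]; simp
  have hFP : ∀ y, Pc (F y) = F (PW y) := by
    have : Pc ∘ₗ F = F ∘ₗ PW := by
      apply Bw.ext
      rintro ⟨n, hn⟩
      simp only [LinearMap.comp_apply, hBw]
      cases n with
      | zero => rw [hF0, hPw, hPb, hFs]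
      | succ m => rw [hFs, map_zero, hPb, hFs]
    intro y
    exact DFunLike.congr_fun this y
  have hFK : ∀ y, Kc (F y) = F (KW y) - (2:ℂ) • F y := by
    have : Kc ∘ₗ F = F ∘ₗ KW - (2:ℂ) • F := by
      apply Bw.ext
      rintro ⟨n, hn⟩
      simp only [LinearMap.comp_apply, LinearMap.sub_apply, LinearMap.smul_apply, hBw]
      cases n with
      | zero => rw [hF0, hKw, hKb, map_smul, hF0]; push_cast; module
      | succ m => rw [hFs, map_zero, hKb, map_smul, hFs]; module
    intro y
    have := DFunLike.congr_fun this y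
    simpa using this
  have hMb0W : MW (b 0) = 0 := by rw [hb0, hMv]
  -- block decomposition of an extension operator
  have hblk : ∀ (XE : Module.End ℂ (Wcl × W)) (Xc' : Module.End ℂ Wcl) (XW' : Module.End ℂ W),
      (LinearMap.inl ℂ Wcl W) ∘ₗ Xc' = XE ∘ₗ (LinearMap.inl ℂ Wcl W) →
      (LinearMap.snd ℂ Wcl W) ∘ₗ XE = XW' ∘ₗ (LinearMap.snd ℂ Wcl W) →
      ∀ x y, XE (x, y) = (Xc' x + (XE (0, y)).1, XW' y) := by
    intro XE Xc' XW' h1 h2 x y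
    have e1 : XE ((x, (0:W))) = (Xc' x, 0) := by
      have h := DFunLike.congr_fun h1 x
      simp only [LinearMap.comp_apply, LinearMap.inl_apply] at h
      exact h.symm
    have e2 : (XE ((0:Wcl), y)).2 = XW' y := by
      have h := DFunLike.congr_fun h2 (((0:Wcl), y))
      simpa using h
    have hsum : XE (x, y) = XE (x, 0) + XE (0, y) := by
      rw [← map_add]
      congr 1
      simp
    rw [hsum, e1]
    refine Prod.ext ?_ ?_
    · simp
    · simp [e2]
  -- KEY LEMMA: every extension gives a map σ and a scalar lam
  have key : ∀ KE PE ME : Module.End ℂ (Wcl × W),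
      PE * ME - ME * PE = KE → KE * PE - PE * KE = (2:ℂ) • PE →
      KE * ME - ME * KE = (-2:ℂ) • ME →
      (LinearMap.inl ℂ Wcl W) ∘ₗ Kc = KE ∘ₗ (LinearMap.inl ℂ Wcl W) →
      (LinearMap.inl ℂ Wcl W) ∘ₗ Pc = PE ∘ₗ (LinearMap.inl ℂ Wcl W) →
      (LinearMap.inl ℂ Wcl W) ∘ₗ Mc = ME ∘ₗ (LinearMap.inl ℂ Wcl W) →
      (LinearMap.snd ℂ Wcl W) ∘ₗ KE = KW ∘ₗ (LinearMap.snd ℂ Wcl W) →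
      (LinearMap.snd ℂ Wcl W) ∘ₗ PE = PW ∘ₗ (LinearMap.snd ℂ Wcl W) →
      (LinearMap.snd ℂ Wcl W) ∘ₗ ME = MW ∘ₗ (LinearMap.snd ℂ Wcl W) →
      ∃ (σ : W →ₗ[ℂ] Wcl) (lam : ℂ),
        (∀ y, σ (KW y) - Kc (σ y) = (KE (0, y)).1) ∧
        (∀ y, σ (PW y) - Pc (σ y) = (PE (0, y)).1) ∧
        (∀ y, σ (MW y) - Mc (σ y) = (ME (0, y)).1 - lam • F y) := by
    intro KE PE ME hr1 hr2 hr3 icK icP icM scK scP scM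
    set τK : W →ₗ[ℂ] Wcl := LinearMap.fst ℂ Wcl W ∘ₗ KE ∘ₗ LinearMap.inr ℂ Wcl W with hτKdef
    set τP : W →ₗ[ℂ] Wcl := LinearMap.fst ℂ Wcl W ∘ₗ PE ∘ₗ LinearMap.inr ℂ Wcl W with hτPdef
    set τM : W →ₗ[ℂ] Wcl := LinearMap.fst ℂ Wcl W ∘ₗ ME ∘ₗ LinearMap.inr ℂ Wcl W with hτMdef
    have hτKy : ∀ y, (KE (0, y)).1 = τK y := fun y => by simp [hτKdef]
    have hτPy : ∀ y, (PE (0, y)).1 = τP y := fun y => by simp [hτPdef]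
    have hτMy : ∀ y, (ME (0, y)).1 = τM y := fun y => by simp [hτMdef]
    have hbK : ∀ x y, KE (x, y) = (Kc x + τK y, KW y) := fun x y => by
      rw [hblk KE Kc KW icK scK x y, hτKy]
    have hbP : ∀ x y, PE (x, y) = (Pc x + τP y, PW y) := fun x y => by
      rw [hblk PE Pc PW icP scP x y, hτPy]
    have hbM : ∀ x y, ME (x, y) = (Mc x + τM y, MW y) := fun x y => by
      rw [hblk ME Mc MW icM scM x y, hτMy]
    -- cocycle identities
    have hC1 : ∀ y, Pc (τM y) + τP (MW y) - (Mc (τP y) + τM (PW y)) = τK y := by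
      intro y
      have h := DFunLike.congr_fun hr1 ((0:Wcl), y)
      simp only [LinearMap.sub_apply, Module.End.mul_apply] at h
      rw [hbM 0 y, hbP 0 y, hbP (Mc 0 + τM y) (MW y), hbM (Pc 0 + τP y) (PW y), hbK 0 y] at h
      have h1 := congrArg Prod.fst h
      simp only [Prod.fst_sub, map_zero, zero_add, map_add] at h1
      linear_combination (norm := module) h1
    have hC2 : ∀ y, Kc (τP y) + τK (PW y) - (Pc (τK y) + τP (KW y)) = (2:ℂ) • τP y := by
      intro y
      have h := DFunLike.congr_fun hr2 ((0:Wcl), y)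
      simp only [LinearMap.sub_apply, Module.End.mul_apply, LinearMap.smul_apply] at h
      rw [hbP 0 y, hbK 0 y, hbK (Pc 0 + τP y) (PW y), hbP (Kc 0 + τK y) (KW y)] at h
      have h1 := congrArg Prod.fst h
      simp only [Prod.fst_sub, Prod.smul_fst, map_zero, zero_add, map_add] at h1
      linear_combination (norm := module) h1
    have hC3 : ∀ y, Kc (τM y) + τK (MW y) - (Mc (τK y) + τM (KW y)) = (-2:ℂ) • τM y := by
      intro y
      have h := DFunLike.congr_fun hr3 ((0:Wcl), y)
      simp only [LinearMap.sub_apply, Module.End.mul_apply, LinearMap.smul_apply] at h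
      rw [hbM 0 y, hbK 0 y, hbK (Mc 0 + τM y) (MW y), hbM (Kc 0 + τK y) (KW y)] at h
      have h1 := congrArg Prod.fst h
      simp only [Prod.fst_sub, Prod.smul_fst, map_zero, zero_add, map_add] at h1
      linear_combination (norm := module) h1
    -- construct the sequence s
    obtain ⟨s0, hs0⟩ := hsurj (τK (b 0))
    set s : ℕ → Wcl := fun n => Nat.rec s0 (fun n sn => Pc sn + τP (b n)) n with hsdef
    have hs_succ : ∀ n, s (n + 1) = Pc (s n) + τP (b n) := fun n => rfl
    have hsK : ∀ n : ℕ, (ζ + 2 * n) • s n - Kc (s n) = τK (b n) := by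
      intro n
      induction n with
      | zero => rw [Nat.cast_zero, mul_zero, add_zero]; exact hs0
      | succ n ih =>
          have hC2n := hC2 (b n)
          rw [hKb n, hPb n, map_smul] at hC2n
          have hp := congrArg Pc ih
          rw [map_sub, map_smul] at hp
          rw [hs_succ n, map_add, hKPc (s n)]
          push_cast
          linear_combination (norm := module) hp - hC2n
    -- the scalar lam
    have hlamex : ∃ lam : ℂ, τM (b 0) + Mc s0 = lam • w := by
      apply hwdim
      have hC3v := hC3 (b 0)
      rw [hMb0W, map_zero, hKb 0, map_smul] at hC3v
      push_cast at hC3v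
      have hs0' := congrArg Mc hs0
      rw [map_sub, map_smul] at hs0'
      rw [map_add]
      linear_combination (norm := module) hC3v - hs0' + hKMc s0
    obtain ⟨lam, hlam⟩ := hlamex
    have hsM : ∀ n : ℕ, Mc (s (n + 1)) = -(τM (b (n + 1))) - (((n:ℂ) + 1) * (ζ + n)) • s n := by
      intro n
      induction n with
      | zero =>
          have hC1v := hC1 (b 0)
          rw [hMb0W, map_zero, hPb 0] at hC1v
          have hlams : τM (b 0) + Mc (s 0) = lam • w := hlam
          have hply := congrArg Pc hlams
          rw [map_add, map_smul, hPw, smul_zero] at hply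
          have hs0s : ζ • s 0 - Kc (s 0) = τK (b 0) := hs0
          rw [hs_succ 0, map_add, hMPc (s 0)]
          push_cast
          linear_combination (norm := module) hply + hs0s - hC1v
      | succ n ih =>
          have hC1n := hC1 (b (n + 1))
          rw [hMb n, hPb (n + 1), map_smul] at hC1n
          have hpih := congrArg Pc ih
          rw [map_sub, map_neg, map_smul] at hpih
          have hps : Pc (s n) = s (n + 1) - τP (b n) := by rw [hs_succ n]; abel
          have hKn := hsK (n + 1)
          rw [hs_succ (n + 1), map_add, hMPc (s (n + 1))]
          push_cast at hpih hKn ⊢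
          linear_combination (norm := module) hpih + hKn - hC1n - (((n:ℂ) + 1) * (ζ + n)) • hps
    -- s vanishes where b does
    have hszero : ∀ n, b n = 0 → s n = 0 := by
      intro n hn
      apply hker' n
      have h := hsK n
      rw [hn, map_zero] at h
      linear_combination (norm := module) -h
    -- the linear map σ
    set σ : W →ₗ[ℂ] Wcl := Bw.constr ℂ (fun i => s i) with hσdef
    have hσb : ∀ n, σ (b n) = s n := by
      intro n
      by_cases h : b n = 0
      · rw [h, map_zero, hszero n h]
      · have hh : b n = Bw ⟨n, h⟩ := (hBw ⟨n, h⟩).symm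
        rw [hh, hσdef, Module.Basis.constr_basis]
    refine ⟨σ, lam, ?_, ?_, ?_⟩
    · have hmap : σ ∘ₗ KW - Kc ∘ₗ σ = τK := by
        apply Bw.ext
        rintro ⟨n, hn⟩
        simp only [LinearMap.sub_apply, LinearMap.comp_apply, hBw]
        rw [hKb n, map_smul, hσb n, ← hsK n]
      intro y
      rw [hτKy y]
      have h := DFunLike.congr_fun hmap y
      simpa using h
    · have hmap : σ ∘ₗ PW - Pc ∘ₗ σ = τP := by
        apply Bw.ext
        rintro ⟨n, hn⟩
        simp only [LinearMap.sub_apply, LinearMap.comp_apply, hBw]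
        rw [hPb n, hσb (n + 1), hσb n, hs_succ n]
        abel
      intro y
      rw [hτPy y]
      have h := DFunLike.congr_fun hmap y
      simpa using h
    · have hmap : σ ∘ₗ MW - Mc ∘ₗ σ = τM - lam • F := by
        apply Bw.ext
        rintro ⟨n, hn⟩
        simp only [LinearMap.sub_apply, LinearMap.comp_apply, LinearMap.smul_apply, hBw]
        cases n with
        | zero =>
            rw [hMb0W, map_zero, hσb 0, hF0]
            linear_combination (norm := module) -hlam
        | succ m =>
            rw [hMb m, map_smul, hσb m, hσb (m + 1), hsM m, hFs m]
            push_cast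
            module
      intro y
      rw [hτMy y]
      have h := DFunLike.congr_fun hmap y
      simpa using h
  have hKMW : ∀ x : W, KW (MW x) = MW (KW x) - (2:ℂ) • MW x := fun x => by
    have h := DFunLike.congr_fun hW3 x
    simp only [LinearMap.sub_apply, Module.End.mul_apply, LinearMap.smul_apply] at h
    linear_combination (norm := module) h
  -- PART 1: the fundamental nonsplit extension
  have part1 : (∃ KE PE ME : Module.End ℂ (Wcl × W),
      PE * ME - ME * PE = KE ∧ KE * PE - PE * KE = (2 : ℂ) • PE ∧
        KE * ME - ME * KE = (-2 : ℂ) • ME ∧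
      (LinearMap.inl ℂ Wcl W) ∘ₗ Kc = KE ∘ₗ (LinearMap.inl ℂ Wcl W) ∧
      (LinearMap.inl ℂ Wcl W) ∘ₗ Pc = PE ∘ₗ (LinearMap.inl ℂ Wcl W) ∧
      (LinearMap.inl ℂ Wcl W) ∘ₗ Mc = ME ∘ₗ (LinearMap.inl ℂ Wcl W) ∧
      (LinearMap.snd ℂ Wcl W) ∘ₗ KE = KW ∘ₗ (LinearMap.snd ℂ Wcl W) ∧
      (LinearMap.snd ℂ Wcl W) ∘ₗ PE = PW ∘ₗ (LinearMap.snd ℂ Wcl W) ∧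
      (LinearMap.snd ℂ Wcl W) ∘ₗ ME = MW ∘ₗ (LinearMap.snd ℂ Wcl W) ∧
      ¬ ∃ s : W →ₗ[ℂ] Wcl × W, (LinearMap.snd ℂ Wcl W) ∘ₗ s = LinearMap.id ∧
          s ∘ₗ KW = KE ∘ₗ s ∧ s ∘ₗ PW = PE ∘ₗ s ∧ s ∘ₗ MW = ME ∘ₗ s) := by
    refine ⟨Kc.prodMap KW, Pc.prodMap PW,
      Mc.prodMap MW + (LinearMap.inl ℂ Wcl W) ∘ₗ (F ∘ₗ (LinearMap.snd ℂ Wcl W)),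
      ?_, ?_, ?_, ?_, ?_, ?_, ?_, ?_, ?_, ?_⟩
    · apply LinearMap.ext; rintro ⟨x, y⟩
      simp only [LinearMap.sub_apply, Module.End.mul_apply, LinearMap.add_apply,
        LinearMap.prodMap_apply, LinearMap.comp_apply, LinearMap.inl_apply,
        LinearMap.snd_apply, Prod.mk_add_mk, add_zero, map_add, Prod.mk_sub_mk,
        Prod.mk.injEq]
      refine ⟨?_, ?_⟩
      · rw [hMPc x, hFP y]; abel
      · linear_combination (norm := module) -(hMPW y)
    · apply LinearMap.ext; rintro ⟨x, y⟩
      simp only [LinearMap.sub_apply, Module.End.mul_apply, LinearMap.smul_apply,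
        LinearMap.prodMap_apply, Prod.smul_mk, Prod.mk_sub_mk, Prod.mk.injEq]
      refine ⟨?_, ?_⟩
      · linear_combination (norm := module) hKPc x
      · linear_combination (norm := module) hKPW y
    · apply LinearMap.ext; rintro ⟨x, y⟩
      simp only [LinearMap.sub_apply, Module.End.mul_apply, LinearMap.add_apply,
        LinearMap.prodMap_apply, LinearMap.comp_apply, LinearMap.inl_apply,
        LinearMap.snd_apply, Prod.mk_add_mk, add_zero, map_add, LinearMap.smul_apply,
        Prod.smul_mk, Prod.mk_sub_mk, Prod.mk.injEq]
      refine ⟨?_, ?_⟩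
      · rw [hKMc x, hFK y]; module
      · linear_combination (norm := module) hKMW y
    · apply LinearMap.ext; intro x
      simp
    · apply LinearMap.ext; intro x
      simp
    · apply LinearMap.ext; intro x
      simp
    · apply LinearMap.ext; rintro ⟨x, y⟩
      simp
    · apply LinearMap.ext; rintro ⟨x, y⟩
      simp
    · apply LinearMap.ext; rintro ⟨x, y⟩
      simp
    · rintro ⟨sec, hsnd, hsecK, hsecP, hsecM⟩
      have hsec : ∀ y, sec y = ((sec y).1, y) := by
        intro y
        have := DFunLike.congr_fun hsnd y
        simp only [LinearMap.comp_apply, LinearMap.snd_apply, LinearMap.id_apply] at this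
        exact Prod.ext_iff.2 ⟨rfl, this⟩
      have hv0 : (sec v).1 = 0 := by
        apply hker' 0
        have h := DFunLike.congr_fun hsecK v
        simp only [LinearMap.comp_apply, hKv, map_smul] at h
        rw [hsec v, LinearMap.prodMap_apply] at h
        have h1 := congrArg Prod.fst h
        simp only [Prod.smul_mk, Prod.smul_fst] at h1
        push_cast
        rw [← h1]
        module
      have h := DFunLike.congr_fun hsecM v
      simp only [LinearMap.comp_apply, hMv, map_zero, LinearMap.add_apply,
        LinearMap.inl_apply, LinearMap.snd_apply] at h
      rw [hsec v, LinearMap.prodMap_apply, hv0, map_zero] at h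
      have h1 := congrArg Prod.fst h
      simp only [Prod.fst_add, Prod.fst_zero] at h1
      rw [← hb0, hF0] at h1
      exact hw (by simpa using h1.symm)
  -- PART 2
  have part2 : (∀ KE₁ PE₁ ME₁ KE₂ PE₂ ME₂ : Module.End ℂ (Wcl × W),
      (PE₁ * ME₁ - ME₁ * PE₁ = KE₁ ∧ KE₁ * PE₁ - PE₁ * KE₁ = (2 : ℂ) • PE₁ ∧
        KE₁ * ME₁ - ME₁ * KE₁ = (-2 : ℂ) • ME₁) →
      (PE₂ * ME₂ - ME₂ * PE₂ = KE₂ ∧ KE₂ * PE₂ - PE₂ * KE₂ = (2 : ℂ) • PE₂ ∧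
        KE₂ * ME₂ - ME₂ * KE₂ = (-2 : ℂ) • ME₂) →
      ((LinearMap.inl ℂ Wcl W) ∘ₗ Kc = KE₁ ∘ₗ (LinearMap.inl ℂ Wcl W) ∧
        (LinearMap.inl ℂ Wcl W) ∘ₗ Pc = PE₁ ∘ₗ (LinearMap.inl ℂ Wcl W) ∧
        (LinearMap.inl ℂ Wcl W) ∘ₗ Mc = ME₁ ∘ₗ (LinearMap.inl ℂ Wcl W) ∧
        (LinearMap.snd ℂ Wcl W) ∘ₗ KE₁ = KW ∘ₗ (LinearMap.snd ℂ Wcl W) ∧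
        (LinearMap.snd ℂ Wcl W) ∘ₗ PE₁ = PW ∘ₗ (LinearMap.snd ℂ Wcl W) ∧
        (LinearMap.snd ℂ Wcl W) ∘ₗ ME₁ = MW ∘ₗ (LinearMap.snd ℂ Wcl W)) →
      ((LinearMap.inl ℂ Wcl W) ∘ₗ Kc = KE₂ ∘ₗ (LinearMap.inl ℂ Wcl W) ∧
        (LinearMap.inl ℂ Wcl W) ∘ₗ Pc = PE₂ ∘ₗ (LinearMap.inl ℂ Wcl W) ∧
        (LinearMap.inl ℂ Wcl W) ∘ₗ Mc = ME₂ ∘ₗ (LinearMap.inl ℂ Wcl W) ∧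
        (LinearMap.snd ℂ Wcl W) ∘ₗ KE₂ = KW ∘ₗ (LinearMap.snd ℂ Wcl W) ∧
        (LinearMap.snd ℂ Wcl W) ∘ₗ PE₂ = PW ∘ₗ (LinearMap.snd ℂ Wcl W) ∧
        (LinearMap.snd ℂ Wcl W) ∘ₗ ME₂ = MW ∘ₗ (LinearMap.snd ℂ Wcl W)) →
      (¬ ∃ s : W →ₗ[ℂ] Wcl × W, (LinearMap.snd ℂ Wcl W) ∘ₗ s = LinearMap.id ∧
          s ∘ₗ KW = KE₁ ∘ₗ s ∧ s ∘ₗ PW = PE₁ ∘ₗ s ∧ s ∘ₗ MW = ME₁ ∘ₗ s) →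
      (¬ ∃ s : W →ₗ[ℂ] Wcl × W, (LinearMap.snd ℂ Wcl W) ∘ₗ s = LinearMap.id ∧
          s ∘ₗ KW = KE₂ ∘ₗ s ∧ s ∘ₗ PW = PE₂ ∘ₗ s ∧ s ∘ₗ MW = ME₂ ∘ₗ s) →
      ∃ (c : ℂ) (φ : (Wcl × W) ≃ₗ[ℂ] (Wcl × W)), c ≠ 0 ∧
        (φ : Wcl × W →ₗ[ℂ] Wcl × W) ∘ₗ KE₁ = KE₂ ∘ₗ (φ : Wcl × W →ₗ[ℂ] Wcl × W) ∧
        (φ : Wcl × W →ₗ[ℂ] Wcl × W) ∘ₗ PE₁ = PE₂ ∘ₗ (φ : Wcl × W →ₗ[ℂ] Wcl × W) ∧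
        (φ : Wcl × W →ₗ[ℂ] Wcl × W) ∘ₗ ME₁ = ME₂ ∘ₗ (φ : Wcl × W →ₗ[ℂ] Wcl × W) ∧
        (LinearMap.snd ℂ Wcl W) ∘ₗ (φ : Wcl × W →ₗ[ℂ] Wcl × W)
          = LinearMap.snd ℂ Wcl W ∧
        (φ : Wcl × W →ₗ[ℂ] Wcl × W) ∘ₗ (LinearMap.inl ℂ Wcl W)
          = c • LinearMap.inl ℂ Wcl W) := by
    rintro KE₁ PE₁ ME₁ KE₂ PE₂ ME₂ ⟨hr11, hr12, hr13⟩ ⟨hr21, hr22, hr23⟩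
      ⟨hi1K, hi1P, hi1M, hs1K, hs1P, hs1M⟩ ⟨hi2K, hi2P, hi2M, hs2K, hs2P, hs2M⟩ hns1 hns2
    obtain ⟨σ₁, lam₁, hσ1K, hσ1P, hσ1M⟩ :=
      key KE₁ PE₁ ME₁ hr11 hr12 hr13 hi1K hi1P hi1M hs1K hs1P hs1M
    obtain ⟨σ₂, lam₂, hσ2K, hσ2P, hσ2M⟩ :=
      key KE₂ PE₂ ME₂ hr21 hr22 hr23 hi2K hi2P hi2M hs2K hs2P hs2M
    have hb1K : ∀ x y, KE₁ (x, y) = (Kc x + (KE₁ (0, y)).1, KW y) := hblk KE₁ Kc KW hi1K hs1K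
    have hb1P : ∀ x y, PE₁ (x, y) = (Pc x + (PE₁ (0, y)).1, PW y) := hblk PE₁ Pc PW hi1P hs1P
    have hb1M : ∀ x y, ME₁ (x, y) = (Mc x + (ME₁ (0, y)).1, MW y) := hblk ME₁ Mc MW hi1M hs1M
    have hb2K : ∀ x y, KE₂ (x, y) = (Kc x + (KE₂ (0, y)).1, KW y) := hblk KE₂ Kc KW hi2K hs2K
    have hb2P : ∀ x y, PE₂ (x, y) = (Pc x + (PE₂ (0, y)).1, PW y) := hblk PE₂ Pc PW hi2P hs2P
    have hb2M : ∀ x y, ME₂ (x, y) = (Mc x + (ME₂ (0, y)).1, MW y) := hblk ME₂ Mc MW hi2M hs2M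
    -- nonsplit implies lam ≠ 0 (shown generically)
    have hlamne : ∀ (KE PE ME : Module.End ℂ (Wcl × W)) (σ : W →ₗ[ℂ] Wcl) (lam : ℂ),
        (∀ x y, KE (x, y) = (Kc x + (KE (0, y)).1, KW y)) →
        (∀ x y, PE (x, y) = (Pc x + (PE (0, y)).1, PW y)) →
        (∀ x y, ME (x, y) = (Mc x + (ME (0, y)).1, MW y)) →
        (∀ y, σ (KW y) - Kc (σ y) = (KE (0, y)).1) →
        (∀ y, σ (PW y) - Pc (σ y) = (PE (0, y)).1) →
        (∀ y, σ (MW y) - Mc (σ y) = (ME (0, y)).1 - lam • F y) →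
        (¬ ∃ s : W →ₗ[ℂ] Wcl × W, (LinearMap.snd ℂ Wcl W) ∘ₗ s = LinearMap.id ∧
          s ∘ₗ KW = KE ∘ₗ s ∧ s ∘ₗ PW = PE ∘ₗ s ∧ s ∘ₗ MW = ME ∘ₗ s) → lam ≠ 0 := by
      intro KE PE ME σ lam hbK hbP hbM hσK hσP hσM hns h0
      apply hns
      refine ⟨LinearMap.prod σ LinearMap.id, ?_, ?_, ?_, ?_⟩
      · apply LinearMap.ext; intro y
        simp
      · apply LinearMap.ext; intro y
        simp only [LinearMap.comp_apply, LinearMap.prod_apply, Pi.prod, Function.prod, LinearMap.id_apply]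
        rw [hbK (σ y) y]
        refine Prod.ext_iff.2 ⟨?_, rfl⟩
        simp only
        linear_combination (norm := module) hσK y
      · apply LinearMap.ext; intro y
        simp only [LinearMap.comp_apply, LinearMap.prod_apply, Pi.prod, Function.prod, LinearMap.id_apply]
        rw [hbP (σ y) y]
        refine Prod.ext_iff.2 ⟨?_, rfl⟩
        simp only
        linear_combination (norm := module) hσP y
      · apply LinearMap.ext; intro y
        simp only [LinearMap.comp_apply, LinearMap.prod_apply, Pi.prod, Function.prod, LinearMap.id_apply]
        rw [hbM (σ y) y]
        refine Prod.ext_iff.2 ⟨?_, rfl⟩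
        simp only
        have h := hσM y
        rw [h0, zero_smul, sub_zero] at h
        linear_combination (norm := module) h
    have hlam1 : lam₁ ≠ 0 := hlamne KE₁ PE₁ ME₁ σ₁ lam₁ hb1K hb1P hb1M hσ1K hσ1P hσ1M hns1
    have hlam2 : lam₂ ≠ 0 := hlamne KE₂ PE₂ ME₂ σ₂ lam₂ hb2K hb2P hb2M hσ2K hσ2P hσ2M hns2
    set c : ℂ := lam₂ / lam₁ with hc
    have hc0 : c ≠ 0 := div_ne_zero hlam2 hlam1
    have hclam : lam₂ = c * lam₁ := by rw [hc, div_mul_cancel₀ _ hlam1]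
    set θ : W →ₗ[ℂ] Wcl := σ₂ - c • σ₁ with hθ
    have hθap : ∀ z, θ z = σ₂ z - c • σ₁ z := fun z => by simp [hθ]
    set f : (Wcl × W) →ₗ[ℂ] (Wcl × W) :=
      LinearMap.prod (c • LinearMap.fst ℂ Wcl W + θ ∘ₗ LinearMap.snd ℂ Wcl W)
        (LinearMap.snd ℂ Wcl W) with hf
    set g : (Wcl × W) →ₗ[ℂ] (Wcl × W) :=
      LinearMap.prod (c⁻¹ • (LinearMap.fst ℂ Wcl W - θ ∘ₗ LinearMap.snd ℂ Wcl W))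
        (LinearMap.snd ℂ Wcl W) with hg
    have hfap : ∀ x y, f (x, y) = (c • x + θ y, y) := fun x y => by
      simp [hf, Pi.prod]
    have hgap : ∀ x y, g (x, y) = (c⁻¹ • (x - θ y), y) := fun x y => by
      simp [hg, Pi.prod]
    have hfg : f.comp g = LinearMap.id := by
      apply LinearMap.ext; rintro ⟨x, y⟩
      rw [LinearMap.comp_apply, hgap, hfap, smul_smul, mul_inv_cancel₀ hc0, one_smul]
      simp
    have hgf : g.comp f = LinearMap.id := by
      apply LinearMap.ext; rintro ⟨x, y⟩
      rw [LinearMap.comp_apply, hfap, hgap]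
      simp only [LinearMap.id_apply, Prod.mk.injEq, and_true]
      rw [add_sub_cancel_right, smul_smul, inv_mul_cancel₀ hc0, one_smul]
    refine ⟨c, LinearEquiv.ofLinear f g hfg hgf, hc0, ?_, ?_, ?_, ?_, ?_⟩
    · rw [LinearEquiv.ofLinear_toLinearMap]
      apply LinearMap.ext; rintro ⟨x, y⟩
      simp only [LinearMap.comp_apply]
      rw [hb1K x y, hfap, hfap x y, hb2K (c • x + θ y) y]
      refine Prod.ext_iff.2 ⟨?_, rfl⟩
      simp only
      rw [hθap (KW y), hθap y, map_add, map_smul, map_sub, map_smul]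
      linear_combination (norm := module) hσ2K y - c • hσ1K y
    · rw [LinearEquiv.ofLinear_toLinearMap]
      apply LinearMap.ext; rintro ⟨x, y⟩
      simp only [LinearMap.comp_apply]
      rw [hb1P x y, hfap, hfap x y, hb2P (c • x + θ y) y]
      refine Prod.ext_iff.2 ⟨?_, rfl⟩
      simp only
      rw [hθap (PW y), hθap y, map_add, map_smul, map_sub, map_smul]
      linear_combination (norm := module) hσ2P y - c • hσ1P y
    · rw [LinearEquiv.ofLinear_toLinearMap]
      apply LinearMap.ext; rintro ⟨x, y⟩
      simp only [LinearMap.comp_apply]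
      rw [hb1M x y, hfap, hfap x y, hb2M (c • x + θ y) y]
      refine Prod.ext_iff.2 ⟨?_, rfl⟩
      simp only
      rw [hθap (MW y), hθap y, map_add, map_smul, map_sub, map_smul]
      have h2 := hσ2M y
      rw [hclam] at h2
      linear_combination (norm := module) h2 - c • hσ1M y
    · rw [LinearEquiv.ofLinear_toLinearMap]
      apply LinearMap.ext; rintro ⟨x, y⟩
      rw [LinearMap.comp_apply, hfap]
      simp
    · rw [LinearEquiv.ofLinear_toLinearMap]
      apply LinearMap.ext; intro x
      rw [LinearMap.comp_apply, LinearMap.inl_apply, hfap]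
      simp
  exact ⟨part1, part2⟩
end

section
/- The subgroup of SL₂(ℤ) generated by e = [[1,2],[0,1]] and f = [[1,0],[2,1]] consists precisely of the matrices in SL₂(ℤ) that are congruent to the identity modulo 2 and whose diagonal entries are congruent to 1 modulo 4. -/
open Matrix

local notation "SL2" => Matrix.SpecialLinearGroup (Fin 2) ℤ

def sanovGroup : Subgroup (Matrix.SpecialLinearGroup (Fin 2) ℤ) where
  carrier := {A | (4:ℤ) ∣ (A : Matrix (Fin 2) (Fin 2) ℤ) 0 0 - 1 ∧
      (4:ℤ) ∣ (A : Matrix (Fin 2) (Fin 2) ℤ) 1 1 - 1 ∧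
      (2:ℤ) ∣ (A : Matrix (Fin 2) (Fin 2) ℤ) 0 1 ∧
      (2:ℤ) ∣ (A : Matrix (Fin 2) (Fin 2) ℤ) 1 0}
  one_mem' := by
    simp [Matrix.SpecialLinearGroup.coe_one, Matrix.one_apply]
  mul_mem' := by
    rintro A B ⟨⟨a, ha⟩, ⟨d, hd⟩, ⟨b, hb⟩, ⟨c, hc⟩⟩ ⟨⟨a', ha'⟩, ⟨d', hd'⟩, ⟨b', hb'⟩, ⟨c', hc'⟩⟩
    have e1 : (A : Matrix (Fin 2) (Fin 2) ℤ) 0 0 = 4*a + 1 := by omega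
    have e2 : (A : Matrix (Fin 2) (Fin 2) ℤ) 1 1 = 4*d + 1 := by omega
    have e3 : (A : Matrix (Fin 2) (Fin 2) ℤ) 0 1 = 2*b := by omega
    have e4 : (A : Matrix (Fin 2) (Fin 2) ℤ) 1 0 = 2*c := by omega
    have f1 : (B : Matrix (Fin 2) (Fin 2) ℤ) 0 0 = 4*a' + 1 := by omega
    have f2 : (B : Matrix (Fin 2) (Fin 2) ℤ) 1 1 = 4*d' + 1 := by omega
    have f3 : (B : Matrix (Fin 2) (Fin 2) ℤ) 0 1 = 2*b' := by omega
    have f4 : (B : Matrix (Fin 2) (Fin 2) ℤ) 1 0 = 2*c' := by omega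
    simp only [Set.mem_setOf_eq, Matrix.SpecialLinearGroup.coe_mul, Matrix.mul_apply,
      Fin.sum_univ_two, e1, e2, e3, e4, f1, f2, f3, f4]
    exact ⟨⟨a + a' + 4*a*a' + b*c', by ring⟩, ⟨c*b' + d + d' + 4*d*d', by ring⟩,
      ⟨(4*a+1)*b' + b*(4*d'+1), by ring⟩, ⟨c*(4*a'+1) + (4*d+1)*c', by ring⟩⟩
  inv_mem' := by
    rintro A ⟨ha, hd, hb, hc⟩
    rw [Set.mem_setOf_eq, Matrix.SpecialLinearGroup.coe_inv,
      Matrix.adjugate_fin_two]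
    simp only [Matrix.of_apply, Matrix.cons_val', Matrix.cons_val_zero, Matrix.cons_val_one, Matrix.head_cons,
      Matrix.empty_val', Matrix.cons_val_fin_one, Matrix.head_fin_const]
    omega


lemma coe_zpow_upper (e : Matrix.SpecialLinearGroup (Fin 2) ℤ)
    (he : (e : Matrix (Fin 2) (Fin 2) ℤ) = !![1, 2; 0, 1]) (k : ℤ) :
    ((e ^ k : Matrix.SpecialLinearGroup (Fin 2) ℤ) : Matrix (Fin 2) (Fin 2) ℤ)
      = !![1, 2 * k; 0, 1] := by
  have hinv : ((e⁻¹ : Matrix.SpecialLinearGroup (Fin 2) ℤ) : Matrix (Fin 2) (Fin 2) ℤ)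
      = !![1, -2; 0, 1] := by
    rw [Matrix.SpecialLinearGroup.coe_inv, Matrix.adjugate_fin_two, he]
    ext i j
    fin_cases i <;> fin_cases j <;> simp
  induction k using Int.induction_on with
  | zero => simp [Matrix.SpecialLinearGroup.coe_one, Matrix.one_fin_two]
  | succ n ih =>
      rw [_root_.zpow_add_one, Matrix.SpecialLinearGroup.coe_mul, ih, he, Matrix.mul_fin_two]
      norm_num
      ring_nf
  | pred n ih =>
      rw [_root_.zpow_sub_one, Matrix.SpecialLinearGroup.coe_mul, ih, hinv, Matrix.mul_fin_two]
      norm_num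
      ring_nf

lemma coe_zpow_lower (f : Matrix.SpecialLinearGroup (Fin 2) ℤ)
    (hf : (f : Matrix (Fin 2) (Fin 2) ℤ) = !![1, 0; 2, 1]) (k : ℤ) :
    ((f ^ k : Matrix.SpecialLinearGroup (Fin 2) ℤ) : Matrix (Fin 2) (Fin 2) ℤ)
      = !![1, 0; 2 * k, 1] := by
  have hinv : ((f⁻¹ : Matrix.SpecialLinearGroup (Fin 2) ℤ) : Matrix (Fin 2) (Fin 2) ℤ)
      = !![1, 0; -2, 1] := by
    rw [Matrix.SpecialLinearGroup.coe_inv, Matrix.adjugate_fin_two, hf]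
    ext i j
    fin_cases i <;> fin_cases j <;> simp
  induction k using Int.induction_on with
  | zero => simp [Matrix.SpecialLinearGroup.coe_one, Matrix.one_fin_two]
  | succ n ih =>
      rw [_root_.zpow_add_one, Matrix.SpecialLinearGroup.coe_mul, ih, hf, Matrix.mul_fin_two]
      norm_num
      ring_nf
  | pred n ih =>
      rw [_root_.zpow_sub_one, Matrix.SpecialLinearGroup.coe_mul, ih, hinv, Matrix.mul_fin_two]
      norm_num
      ring_nf

lemma sanov_step' (x y : ℤ) (hx : x ≠ 0) (hxy : x.natAbs < y.natAbs) :
    ∃ s : ℤ, (s = 1 ∨ s = -1) ∧ (y + 2 * s * x).natAbs < y.natAbs := by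
  rcases lt_trichotomy x 0 with h1 | h1 | h1 <;> rcases lt_trichotomy y 0 with h2 | h2 | h2
  · exact ⟨-1, Or.inr rfl, by omega⟩
  · exact ⟨1, Or.inl rfl, by omega⟩
  · exact ⟨1, Or.inl rfl, by omega⟩
  · exact ⟨1, Or.inl rfl, by omega⟩
  · exact ⟨1, Or.inl rfl, by omega⟩
  · exact ⟨1, Or.inl rfl, by omega⟩
  · exact ⟨1, Or.inl rfl, by omega⟩
  · exact ⟨1, Or.inl rfl, by omega⟩
  · exact ⟨-1, Or.inr rfl, by omega⟩

lemma mem_sanovGroup (A : Matrix.SpecialLinearGroup (Fin 2) ℤ) :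
    A ∈ sanovGroup ↔ ((4:ℤ) ∣ (A : Matrix (Fin 2) (Fin 2) ℤ) 0 0 - 1 ∧
      (4:ℤ) ∣ (A : Matrix (Fin 2) (Fin 2) ℤ) 1 1 - 1 ∧
      (2:ℤ) ∣ (A : Matrix (Fin 2) (Fin 2) ℤ) 0 1 ∧
      (2:ℤ) ∣ (A : Matrix (Fin 2) (Fin 2) ℤ) 1 0) := Iff.rfl

lemma sanov_reduce (e f : Matrix.SpecialLinearGroup (Fin 2) ℤ)
    (he : (e : Matrix (Fin 2) (Fin 2) ℤ) = !![1, 2; 0, 1])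
    (hf : (f : Matrix (Fin 2) (Fin 2) ℤ) = !![1, 0; 2, 1]) :
    ∀ n : ℕ, ∀ A : Matrix.SpecialLinearGroup (Fin 2) ℤ,
      ((A : Matrix (Fin 2) (Fin 2) ℤ) 0 0).natAbs
        + ((A : Matrix (Fin 2) (Fin 2) ℤ) 1 0).natAbs ≤ n →
      A ∈ sanovGroup → A ∈ Subgroup.closure {e, f} := by
  have heM : e ∈ Subgroup.closure {e, f} := Subgroup.subset_closure (by simp)
  have hfM : f ∈ Subgroup.closure {e, f} := Subgroup.subset_closure (by simp)
  intro n
  induction n with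
  | zero =>
      intro A hsum hmem
      obtain ⟨ha, -, -, -⟩ := (mem_sanovGroup A).1 hmem
      exfalso; omega
  | succ n ih =>
      intro A hsum hmem
      obtain ⟨ha, hd, hb, hc⟩ := (mem_sanovGroup A).1 hmem
      have hdet : (A : Matrix (Fin 2) (Fin 2) ℤ) 0 0 * (A : Matrix (Fin 2) (Fin 2) ℤ) 1 1
          - (A : Matrix (Fin 2) (Fin 2) ℤ) 0 1 * (A : Matrix (Fin 2) (Fin 2) ℤ) 1 0 = 1 := by
        have h2 := A.2
        rw [Matrix.det_fin_two] at h2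
        exact h2
      by_cases hc0 : (A : Matrix (Fin 2) (Fin 2) ℤ) 1 0 = 0
      · have had : (A : Matrix (Fin 2) (Fin 2) ℤ) 0 0 * (A : Matrix (Fin 2) (Fin 2) ℤ) 1 1 = 1 := by
          rw [hc0] at hdet; simpa using hdet
        have ha1 : (A : Matrix (Fin 2) (Fin 2) ℤ) 0 0 = 1 := by
          rcases Int.eq_one_or_neg_one_of_mul_eq_one had with h | h <;> omega
        have hd1 : (A : Matrix (Fin 2) (Fin 2) ℤ) 1 1 = 1 := by
          rw [ha1] at had; omega
        obtain ⟨k, hk⟩ := hb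
        have hAe : A = e ^ k := by
          apply Subtype.ext
          rw [coe_zpow_upper e he, Matrix.eta_fin_two (A : Matrix (Fin 2) (Fin 2) ℤ),
            ha1, hd1, hc0, hk]
        rw [hAe]
        exact zpow_mem heM k
      · have hne : ((A : Matrix (Fin 2) (Fin 2) ℤ) 0 0).natAbs
            ≠ ((A : Matrix (Fin 2) (Fin 2) ℤ) 1 0).natAbs := by omega
        rcases lt_or_gt_of_ne hne with hlt | hgt
        · -- |a| < |c| : reduce c with f ^ s
          have ha0 : (A : Matrix (Fin 2) (Fin 2) ℤ) 0 0 ≠ 0 := by omega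
          obtain ⟨s, hs, hred⟩ := sanov_step' _ _ ha0 hlt
          have hA' : ((f ^ s * A : Matrix.SpecialLinearGroup (Fin 2) ℤ)
              : Matrix (Fin 2) (Fin 2) ℤ)
              = !![(A : Matrix (Fin 2) (Fin 2) ℤ) 0 0, (A : Matrix (Fin 2) (Fin 2) ℤ) 0 1;
                  (A : Matrix (Fin 2) (Fin 2) ℤ) 1 0 + 2 * s * (A : Matrix (Fin 2) (Fin 2) ℤ) 0 0,
                  (A : Matrix (Fin 2) (Fin 2) ℤ) 1 1 + 2 * s * (A : Matrix (Fin 2) (Fin 2) ℤ) 0 1] := by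
            rw [Matrix.SpecialLinearGroup.coe_mul, coe_zpow_lower f hf,
              Matrix.eta_fin_two (A : Matrix (Fin 2) (Fin 2) ℤ), Matrix.mul_fin_two]
            norm_num
            try ring_nf
            exact ⟨trivial, trivial⟩
          have hmem' : f ^ s * A ∈ sanovGroup := by
            rw [mem_sanovGroup, hA']
            simp only [Matrix.of_apply, Matrix.cons_val', Matrix.cons_val_zero, Matrix.cons_val_one,
              Matrix.head_cons, Matrix.empty_val', Matrix.cons_val_fin_one, Matrix.head_fin_const]
            rcases hs with rfl | rfl <;> omega
          have hsum' : (((f ^ s * A : Matrix.SpecialLinearGroup (Fin 2) ℤ)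
                : Matrix (Fin 2) (Fin 2) ℤ) 0 0).natAbs
              + (((f ^ s * A : Matrix.SpecialLinearGroup (Fin 2) ℤ)
                : Matrix (Fin 2) (Fin 2) ℤ) 1 0).natAbs ≤ n := by
            rw [hA']
            simp only [Matrix.of_apply, Matrix.cons_val', Matrix.cons_val_zero, Matrix.cons_val_one,
              Matrix.head_cons, Matrix.empty_val', Matrix.cons_val_fin_one, Matrix.head_fin_const]
            omega
          have hACl := ih (f ^ s * A) hsum' hmem'
          have : A = (f ^ s)⁻¹ * (f ^ s * A) := (inv_mul_cancel_left _ _).symm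
          rw [this]
          exact mul_mem (inv_mem (zpow_mem hfM s)) hACl
        · -- |c| < |a| : reduce a with e ^ s
          obtain ⟨s, hs, hred⟩ := sanov_step' _ _ hc0 hgt
          have hA' : ((e ^ s * A : Matrix.SpecialLinearGroup (Fin 2) ℤ)
              : Matrix (Fin 2) (Fin 2) ℤ)
              = !![(A : Matrix (Fin 2) (Fin 2) ℤ) 0 0 + 2 * s * (A : Matrix (Fin 2) (Fin 2) ℤ) 1 0,
                  (A : Matrix (Fin 2) (Fin 2) ℤ) 0 1 + 2 * s * (A : Matrix (Fin 2) (Fin 2) ℤ) 1 1;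
                  (A : Matrix (Fin 2) (Fin 2) ℤ) 1 0, (A : Matrix (Fin 2) (Fin 2) ℤ) 1 1] := by
            rw [Matrix.SpecialLinearGroup.coe_mul, coe_zpow_upper e he,
              Matrix.eta_fin_two (A : Matrix (Fin 2) (Fin 2) ℤ), Matrix.mul_fin_two]
            norm_num
            try ring_nf
          have hmem' : e ^ s * A ∈ sanovGroup := by
            rw [mem_sanovGroup, hA']
            simp only [Matrix.of_apply, Matrix.cons_val', Matrix.cons_val_zero, Matrix.cons_val_one,
              Matrix.head_cons, Matrix.empty_val', Matrix.cons_val_fin_one, Matrix.head_fin_const]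
            rcases hs with rfl | rfl <;> omega
          have hsum' : (((e ^ s * A : Matrix.SpecialLinearGroup (Fin 2) ℤ)
                : Matrix (Fin 2) (Fin 2) ℤ) 0 0).natAbs
              + (((e ^ s * A : Matrix.SpecialLinearGroup (Fin 2) ℤ)
                : Matrix (Fin 2) (Fin 2) ℤ) 1 0).natAbs ≤ n := by
            rw [hA']
            simp only [Matrix.of_apply, Matrix.cons_val', Matrix.cons_val_zero, Matrix.cons_val_one,
              Matrix.head_cons, Matrix.empty_val', Matrix.cons_val_fin_one, Matrix.head_fin_const]
            omega
          have hACl := ih (e ^ s * A) hsum' hmem'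
          have : A = (e ^ s)⁻¹ * (e ^ s * A) := (inv_mul_cancel_left _ _).symm
          rw [this]
          exact mul_mem (inv_mem (zpow_mem heM s)) hACl

/-- The subgroup of SL₂(ℤ) generated by `e = [[1,2],[0,1]]` and
`f = [[1,0],[2,1]]` consists precisely of the matrices in SL₂(ℤ) congruent to
the identity mod 2 whose diagonal entries are congruent to 1 mod 4. -/
theorem subgroup_generated_by_e_f_description
    (e f : Matrix.SpecialLinearGroup (Fin 2) ℤ)
    (he : (e : Matrix (Fin 2) (Fin 2) ℤ) = !![1, 2; 0, 1])
    (hf : (f : Matrix (Fin 2) (Fin 2) ℤ) = !![1, 0; 2, 1]) :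
    ∀ A : Matrix.SpecialLinearGroup (Fin 2) ℤ,
      A ∈ Subgroup.closure {e, f} ↔
        ((A : Matrix (Fin 2) (Fin 2) ℤ) 0 0 ≡ 1 [ZMOD 4] ∧
         (A : Matrix (Fin 2) (Fin 2) ℤ) 1 1 ≡ 1 [ZMOD 4] ∧
         (A : Matrix (Fin 2) (Fin 2) ℤ) 0 1 ≡ 0 [ZMOD 2] ∧
         (A : Matrix (Fin 2) (Fin 2) ℤ) 1 0 ≡ 0 [ZMOD 2]) := by
  intro A
  have hsub : ({e, f} : Set (Matrix.SpecialLinearGroup (Fin 2) ℤ)) ⊆ sanovGroup := by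
    rintro x (rfl | rfl) <;> rw [SetLike.mem_coe, mem_sanovGroup]
    · rw [he]; norm_num
    · rw [hf]; norm_num
  constructor
  · intro h
    have hm := (Subgroup.closure_le sanovGroup).2 hsub h
    rw [mem_sanovGroup] at hm
    obtain ⟨h1, h2, h3, h4⟩ := hm
    simp only [Int.modEq_iff_dvd]
    omega
  · intro hcond
    simp only [Int.modEq_iff_dvd] at hcond
    obtain ⟨h1, h2, h3, h4⟩ := hcond
    exact sanov_reduce e f he hf _ A le_rfl ((mem_sanovGroup A).2 (by omega))
end
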